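/- Assume p > 1 and l ≥ 2. Assume that the 0/1 matrix P is a parity check matrix of a binary code of distance at least l+1, i.e., every nonzero v ∈ F₂^h with (P mod 2)·v = 0 has Hamming weight at least l+1. Assume also that ‖B·x − w·y‖_p^p > l for every x ∈ ℤ^q and every nonzero integer w. Then every vector u in the lattice L(B_int) with ‖u‖_p^p ≤ l has all of its coordinates even. -/
import Mathlib

/-- The BCH gadget lattice basis `B_BCH = [[Id_h, 0], [l·P, 2l·Id_g]]`. -/
def BBCH (g h l : ℕ) (P : Matrix (Fin g) (Fin h) ℤ) :
    Matrix (Fin h ⊕ Fin g) (Fin h ⊕ Fin g) ℤ :=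
  Matrix.fromBlocks 1 0 ((l : ℤ) • P) ((2 * l : ℤ) • 1)

/-- The intermediate lattice basis `B_int = [[2B, 0, 2y], [0, B_BCH, s]]`. -/
def Bint (n q g h l : ℕ) (B : Matrix (Fin n) (Fin q) ℤ) (y : Fin n → ℤ)
    (P : Matrix (Fin g) (Fin h) ℤ) (s : Fin h ⊕ Fin g → ℤ) :
    Matrix (Fin n ⊕ (Fin h ⊕ Fin g)) ((Fin q ⊕ (Fin h ⊕ Fin g)) ⊕ Unit) ℤ :=
  Matrix.of fun i j =>
    match i, j with
    | Sum.inl i, Sum.inl (Sum.inl j) => 2 * B i j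
    | Sum.inl _, Sum.inl (Sum.inr _) => 0
    | Sum.inl i, Sum.inr _ => 2 * y i
    | Sum.inr _, Sum.inl (Sum.inl _) => 0
    | Sum.inr i, Sum.inl (Sum.inr j) => BBCH g h l P i j
    | Sum.inr i, Sum.inr _ => s i

lemma Bint_top (n q g h l : ℕ) (B : Matrix (Fin n) (Fin q) ℤ) (y : Fin n → ℤ)
    (P : Matrix (Fin g) (Fin h) ℤ) (s : Fin h ⊕ Fin g → ℤ)
    (xx : ((Fin q ⊕ (Fin h ⊕ Fin g)) ⊕ Unit) → ℤ) (i : Fin n) :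
    (Bint n q g h l B y P s).mulVec xx (Sum.inl i)
      = 2 * ((B.mulVec (fun j => xx (Sum.inl (Sum.inl j)))) i + xx (Sum.inr ()) * y i) := by
  simp only [Bint, Matrix.mulVec, dotProduct, Fintype.sum_sum_type, Matrix.of_apply,
    Fintype.sum_unique, zero_mul, Finset.sum_const_zero, add_zero, zero_add]
  rw [mul_add, Finset.mul_sum]
  simp [mul_assoc]
  ring

lemma Bint_h (n q g h l : ℕ) (B : Matrix (Fin n) (Fin q) ℤ) (y : Fin n → ℤ)
    (P : Matrix (Fin g) (Fin h) ℤ) (s : Fin h ⊕ Fin g → ℤ)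
    (xx : ((Fin q ⊕ (Fin h ⊕ Fin g)) ⊕ Unit) → ℤ) (j : Fin h) :
    (Bint n q g h l B y P s).mulVec xx (Sum.inr (Sum.inl j))
      = xx (Sum.inl (Sum.inr (Sum.inl j))) + s (Sum.inl j) * xx (Sum.inr ()) := by
  simp [Bint, BBCH, Matrix.mulVec, dotProduct, Fintype.sum_sum_type, Matrix.one_apply]

lemma Bint_g (n q g h l : ℕ) (B : Matrix (Fin n) (Fin q) ℤ) (y : Fin n → ℤ)
    (P : Matrix (Fin g) (Fin h) ℤ) (s : Fin h ⊕ Fin g → ℤ)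
    (xx : ((Fin q ⊕ (Fin h ⊕ Fin g)) ⊕ Unit) → ℤ) (i : Fin g) :
    (Bint n q g h l B y P s).mulVec xx (Sum.inr (Sum.inr i))
      = l * (P.mulVec (fun j => xx (Sum.inl (Sum.inr (Sum.inl j))))) i
        + 2 * l * xx (Sum.inl (Sum.inr (Sum.inr i))) + s (Sum.inr i) * xx (Sum.inr ()) := by
  simp only [Bint, BBCH, Matrix.mulVec, dotProduct, Fintype.sum_sum_type, Matrix.of_apply,
    Fintype.sum_unique, zero_mul, Finset.sum_const_zero, add_zero, zero_add,
    Matrix.fromBlocks_apply₂₁, Matrix.fromBlocks_apply₂₂, Matrix.smul_apply, Matrix.one_apply,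
    smul_eq_mul, mul_ite, mul_one, mul_zero, ite_mul, zero_mul, Finset.sum_ite_eq, Finset.mem_univ,
    if_true]
  rw [Finset.mul_sum]
  simp [mul_assoc]

theorem stmt14 (n q g h l : ℕ) (hn : 0 < n) (hq : 0 < q) (hg : 0 < g) (hh : 0 < h)
    (hl : 2 ≤ l) (p : ℝ) (hp : 1 < p)
    (B : Matrix (Fin n) (Fin q) ℤ) (y : Fin n → ℤ)
    (P : Matrix (Fin g) (Fin h) ℤ) (hP : ∀ i j, P i j = 0 ∨ P i j = 1)
    (s : Fin h ⊕ Fin g → ℤ)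
    (hcode : ∀ v : Fin h → ZMod 2, v ≠ 0 →
      (P.map (Int.cast : ℤ → ZMod 2)).mulVec v = 0 → l + 1 ≤ hammingNorm v)
    (hNO : ∀ (x : Fin q → ℤ) (w : ℤ), w ≠ 0 →
      (l : ℝ) < ∑ i, |((B.mulVec x - w • y) i : ℝ)| ^ p) :
    ∀ xx : ((Fin q ⊕ (Fin h ⊕ Fin g)) ⊕ Unit) → ℤ,
      (∑ i, |((Bint n q g h l B y P s).mulVec xx i : ℝ)| ^ p) ≤ (l : ℝ) →
      ∀ i, Even ((Bint n q g h l B y P s).mulVec xx i) := by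
  intro xx hsum
  have hp0 : (0:ℝ) ≤ p := le_of_lt (lt_trans one_pos hp)
  set u := (Bint n q g h l B y P s).mulVec xx with hu
  have hterm : ∀ i, (0:ℝ) ≤ |(u i : ℝ)| ^ p := fun i => Real.rpow_nonneg (abs_nonneg _) _
  have hsingle : ∀ i, |(u i : ℝ)| ^ p ≤ (l:ℝ) := fun i =>
    le_trans (Finset.single_le_sum (fun i _ => hterm i) (Finset.mem_univ i)) hsum
  -- split the big sum
  have hsplit : (∑ i : Fin n, |(u (Sum.inl i) : ℝ)| ^ p)
      + ((∑ j : Fin h, |(u (Sum.inr (Sum.inl j)) : ℝ)| ^ p)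
        + (∑ i : Fin g, |(u (Sum.inr (Sum.inr i)) : ℝ)| ^ p)) ≤ (l:ℝ) := by
    calc _ = ∑ i, |(u i : ℝ)| ^ p := by rw [Fintype.sum_sum_type, Fintype.sum_sum_type]
    _ ≤ (l:ℝ) := hsum
  have hnn1 : (0:ℝ) ≤ ∑ i : Fin n, |(u (Sum.inl i) : ℝ)| ^ p :=
    Finset.sum_nonneg fun i _ => hterm _
  have hnn2 : (0:ℝ) ≤ ∑ j : Fin h, |(u (Sum.inr (Sum.inl j)) : ℝ)| ^ p :=
    Finset.sum_nonneg fun i _ => hterm _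
  have hnn3 : (0:ℝ) ≤ ∑ i : Fin g, |(u (Sum.inr (Sum.inr i)) : ℝ)| ^ p :=
    Finset.sum_nonneg fun i _ => hterm _
  set x : Fin q → ℤ := fun j => xx (Sum.inl (Sum.inl j)) with hxdef
  set a : Fin h → ℤ := fun j => xx (Sum.inl (Sum.inr (Sum.inl j))) with hadef
  set w : ℤ := xx (Sum.inr ()) with hwdef
  have htop : ∀ i, u (Sum.inl i) = 2 * ((B.mulVec x) i + w * y i) := fun i =>
    Bint_top n q g h l B y P s xx i
  have hrh : ∀ j, u (Sum.inr (Sum.inl j)) = a j + s (Sum.inl j) * w := fun j =>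
    Bint_h n q g h l B y P s xx j
  have hrg : ∀ i, u (Sum.inr (Sum.inr i)) = l * (P.mulVec a) i
      + 2 * l * xx (Sum.inl (Sum.inr (Sum.inr i))) + s (Sum.inr i) * w := fun i =>
    Bint_g n q g h l B y P s xx i
  -- Step 1 : w = 0
  have hw0 : w = 0 := by
    by_contra hw
    have h1 := hNO x (-w) (neg_ne_zero.mpr hw)
    have h3 : ∀ i : Fin n, |((B.mulVec x - (-w) • y) i : ℝ)| ^ p ≤ |(u (Sum.inl i) : ℝ)| ^ p := by
      intro i
      apply Real.rpow_le_rpow (abs_nonneg _) _ hp0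
      have he : (B.mulVec x - (-w) • y) i = (B.mulVec x) i + w * y i := by
        simp only [Pi.sub_apply, Pi.smul_apply, smul_eq_mul]; ring
      rw [htop i, he]
      push_cast
      rw [abs_mul]
      have := abs_nonneg (((B.mulVec x) i : ℝ) + (w:ℝ) * (y i : ℝ))
      calc |((B.mulVec x) i : ℝ) + (w:ℝ) * (y i : ℝ)|
          ≤ 2 * |((B.mulVec x) i : ℝ) + (w:ℝ) * (y i : ℝ)| := by linarith
      _ = |(2:ℝ)| * |((B.mulVec x) i : ℝ) + (w:ℝ) * (y i : ℝ)| := by norm_num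
    have h4 : (l:ℝ) < ∑ i : Fin n, |(u (Sum.inl i) : ℝ)| ^ p :=
      lt_of_lt_of_le h1 (Finset.sum_le_sum fun i _ => h3 i)
    linarith
  -- Step 2 : all a j are even
  have haeven : ∀ j, Even (a j) := by
    by_contra hae
    push_neg at hae
    obtain ⟨j0, hj0⟩ := hae
    set v : Fin h → ZMod 2 := fun j => ((a j : ℤ) : ZMod 2) with hvdef
    have hvj0 : v j0 ≠ 0 := by
      intro hz
      rw [hvdef] at hz
      simp only [ZMod.intCast_zmod_eq_zero_iff_dvd] at hz
      exact hj0 (even_iff_two_dvd.mpr (by exact_mod_cast hz))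
    have hvne : v ≠ 0 := fun hv => hvj0 (by rw [hv]; rfl)
    have hcast : ∀ i, ((P.map (Int.cast : ℤ → ZMod 2)).mulVec v) i
        = (((P.mulVec a) i : ℤ) : ZMod 2) := by
      intro i
      simp [Matrix.mulVec, dotProduct, Matrix.map_apply, v]
    by_cases hPv : (P.map (Int.cast : ℤ → ZMod 2)).mulVec v = 0
    · -- code case : many odd coordinates
      have hcard := hcode v hvne hPv
      have hone : ∀ j ∈ Finset.univ.filter (fun j => v j ≠ 0),
          (1:ℝ) ≤ |(u (Sum.inr (Sum.inl j)) : ℝ)| ^ p := by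
        intro j hj
        simp only [Finset.mem_filter] at hj
        have hja : ¬ (2:ℤ) ∣ a j := by
          intro hd
          exact hj.2 (by rw [hvdef]; simp [ZMod.intCast_zmod_eq_zero_iff_dvd, hd])
        have haj : (1:ℤ) ≤ |a j| := by
          rcases eq_or_ne (a j) 0 with h0 | h0
          · exact absurd (h0 ▸ dvd_zero 2) hja
          · exact Int.one_le_abs h0
        have : (1:ℝ) ≤ |(u (Sum.inr (Sum.inl j)) : ℝ)| := by
          rw [hrh j, hw0]
          push_cast
          rw [mul_zero, add_zero]
          exact_mod_cast haj
        calc (1:ℝ) = 1 ^ p := (Real.one_rpow p).symm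
        _ ≤ |(u (Sum.inr (Sum.inl j)) : ℝ)| ^ p := Real.rpow_le_rpow zero_le_one this hp0
      have hge : ((l:ℝ) + 1) ≤ ∑ j : Fin h, |(u (Sum.inr (Sum.inl j)) : ℝ)| ^ p := by
        have c1 : ((l + 1 : ℕ) : ℝ) ≤ (hammingNorm v : ℝ) := by exact_mod_cast hcard
        have c2 : (hammingNorm v : ℝ)
            ≤ ∑ j ∈ Finset.univ.filter (fun j => v j ≠ 0),
                |(u (Sum.inr (Sum.inl j)) : ℝ)| ^ p := by
          rw [hammingNorm, Finset.card_eq_sum_ones]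
          push_cast
          exact Finset.sum_le_sum hone
        have c3 : ∑ j ∈ Finset.univ.filter (fun j => v j ≠ 0),
              |(u (Sum.inr (Sum.inl j)) : ℝ)| ^ p
            ≤ ∑ j : Fin h, |(u (Sum.inr (Sum.inl j)) : ℝ)| ^ p :=
          Finset.sum_le_sum_of_subset_of_nonneg (Finset.filter_subset _ _)
            (fun j _ _ => hterm _)
        push_cast at c1
        linarith
      linarith
    · -- non-code case : one coordinate of size ≥ l
      obtain ⟨i0, hi0⟩ := Function.ne_iff.mp hPv
      rw [hcast i0] at hi0
      have hodd : ¬ (2:ℤ) ∣ ((P.mulVec a) i0 + 2 * xx (Sum.inl (Sum.inr (Sum.inr i0)))) := by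
        intro hd
        apply hi0
        have : (2:ℤ) ∣ (P.mulVec a) i0 := by omega
        simp [ZMod.intCast_zmod_eq_zero_iff_dvd, this]
      have hne : ((P.mulVec a) i0 + 2 * xx (Sum.inl (Sum.inr (Sum.inr i0)))) ≠ 0 := by
        intro h0; exact hodd (h0 ▸ dvd_zero 2)
      have habs : (l:ℤ) ≤ |u (Sum.inr (Sum.inr i0))| := by
        rw [hrg i0, hw0, mul_zero, add_zero]
        have : (l:ℤ) * (P.mulVec a) i0 + 2 * l * xx (Sum.inl (Sum.inr (Sum.inr i0)))
            = l * ((P.mulVec a) i0 + 2 * xx (Sum.inl (Sum.inr (Sum.inr i0)))) := by ring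
        rw [this, abs_mul]
        have h1 : (1:ℤ) ≤ |(P.mulVec a) i0 + 2 * xx (Sum.inl (Sum.inr (Sum.inr i0)))| :=
          Int.one_le_abs hne
        have hl' : (0:ℤ) ≤ (l:ℤ) := Int.natCast_nonneg l
        calc (l:ℤ) = |(l:ℤ)| * 1 := by rw [abs_of_nonneg hl', mul_one]
        _ ≤ _ := mul_le_mul_of_nonneg_left h1 (abs_nonneg _)
      have hl1 : (1:ℝ) < (l:ℝ) := by exact_mod_cast lt_of_lt_of_le one_lt_two (by exact_mod_cast hl)
      have hlp : (l:ℝ) < (l:ℝ) ^ p := by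
        calc (l:ℝ) = (l:ℝ) ^ (1:ℝ) := (Real.rpow_one _).symm
        _ < (l:ℝ) ^ p := Real.rpow_lt_rpow_of_exponent_lt hl1 hp
      have h2 : (l:ℝ) ^ p ≤ |(u (Sum.inr (Sum.inr i0)) : ℝ)| ^ p := by
        apply Real.rpow_le_rpow (by positivity) _ hp0
        have : ((l:ℤ) : ℝ) ≤ (|u (Sum.inr (Sum.inr i0))| : ℝ) := by exact_mod_cast habs
        simpa [Int.cast_abs] using this
      have := hsingle (Sum.inr (Sum.inr i0))
      linarith
  -- conclusion
  intro i
  rcases i with i | j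
  · rw [htop i]; exact even_two_mul _
  · rcases j with j | i
    · rw [hrh j, hw0, mul_zero, add_zero]; exact haeven j
    · rw [hrg i, hw0, mul_zero, add_zero]
      have hPa : Even ((P.mulVec a) i) := by
        rw [even_iff_two_dvd]
        simp only [Matrix.mulVec, dotProduct]
        exact Finset.dvd_sum fun k _ =>
          Dvd.dvd.mul_left (even_iff_two_dvd.mp (haeven k)) (P i k)
      have h1 : Even ((l:ℤ) * (P.mulVec a) i) := hPa.mul_left _
      have h2 : Even ((2:ℤ) * l * xx (Sum.inl (Sum.inr (Sum.inr i)))) := by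
        rw [mul_assoc]; exact even_two_mul _
      exact h1.add h2
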